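/- arXiv:2005.07214 — 5 statements merged into one kernel-verified Lean document; each statement's English description precedes it below -/
import Mathlib

section
/- Let p be a prime number and let M be a module over ℤ[1/p]. Let T = ℤ[1/p](+)M be the trivial extension of ℤ[1/p] by M, and let R be the subring of T consisting of those elements whose first component lies in the image of ℤ in ℤ[1/p]. Then R and T are adjacent: R ≠ T and every subring S of T with R ⊆ S ⊆ T satisfies S = R or S = T. -/
/-- Let T = ℤ[1/p](+)M be the trivial extension and R the subring of T of elements whose
first component lies in the image of ℤ. Then R and T are adjacent rings. -/
theorem triv_ext_adjacent (p : ℕ) (hp : p.Prime) (M : Type*) [AddCommGroup M]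
    [Module (Localization.Away (p : ℤ)) M]
    [Module (Localization.Away (p : ℤ))ᵐᵒᵖ M]
    [IsCentralScalar (Localization.Away (p : ℤ)) M]
    (R : Subring (TrivSqZeroExt (Localization.Away (p : ℤ)) M))
    (hR : R = Subring.comap
      (TrivSqZeroExt.fstHom (Localization.Away (p : ℤ)) (Localization.Away (p : ℤ)) M).toRingHom
      (algebraMap ℤ (Localization.Away (p : ℤ))).range) :
    R ≠ ⊤ ∧ ∀ S : Subring (TrivSqZeroExt (Localization.Away (p : ℤ)) M),
      R ≤ S → S = R ∨ S = ⊤ := by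
  set A := Localization.Away (p : ℤ) with hA
  set φ : ℤ →+* A := algebraMap ℤ A with hφ
  have hpz : (p : ℤ) ≠ 0 := Int.natCast_ne_zero.mpr hp.ne_zero
  have hφinj : Function.Injective φ :=
    IsLocalization.injective A (powers_le_nonZeroDivisors_of_noZeroDivisors hpz)
  set u : A := IsLocalization.Away.invSelf (p : ℤ) with hu
  have hpu : φ (p : ℤ) * u = 1 := IsLocalization.Away.mul_invSelf (p : ℤ)
  -- u is not in the image of ℤ
  have hunr : u ∉ φ.range := by
    rintro ⟨n, hn⟩
    have : φ ((p : ℤ) * n) = φ 1 := by rw [map_mul, map_one, hn, hpu]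
    have h1 : (p : ℤ) * n = 1 := hφinj this
    exact (Nat.prime_iff_prime_int.mp hp).not_isUnit (IsUnit.of_mul_eq_one _ h1)
  -- key lemma: any subring of A containing an element outside φ.range contains u
  have key : ∀ (B : Subring A) (k : ℕ) (x : A), x ∈ B → x ∉ φ.range →
      x * φ (p : ℤ) ^ k ∈ φ.range → u ∈ B := by
    intro B k
    induction k with
    | zero => intro x hxB hxr hxk; rw [pow_zero, mul_one] at hxk; exact absurd hxk hxr
    | succ k ih =>
      intro x hxB hxr hxk
      obtain ⟨n, hn⟩ := hxk
      by_cases hdvd : (p : ℤ) ∣ n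
      · obtain ⟨m, rfl⟩ := hdvd
        apply ih x hxB hxr
        refine ⟨m, ?_⟩
        have hcalc : φ (p : ℤ) * φ m = φ (p : ℤ) * (x * φ (p : ℤ) ^ k) := by
          rw [← map_mul, hn, pow_succ]; ring
        have h3 := congrArg (fun z => u * z) hcalc
        simp only [← mul_assoc, mul_comm u (φ (p : ℤ)), hpu, one_mul] at h3
        exact h3
      · obtain ⟨a, b, hab⟩ := ((Nat.prime_iff_prime_int.mp hp).coprime_iff_not_dvd.mpr hdvd)
        -- a * p + b * n = 1
        have h1 : φ (p : ℤ) * (φ a + φ b * (x * φ (p : ℤ) ^ k)) = 1 := by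
          have := congrArg φ hab
          rw [map_add, map_mul, map_mul, map_one] at this
          rw [← this, hn, pow_succ]; ring
        have hu_eq : u = φ a + φ b * (x * φ (p : ℤ) ^ k) := by
          have : u * (φ (p : ℤ) * (φ a + φ b * (x * φ (p : ℤ) ^ k))) = u * 1 := by rw [h1]
          rw [mul_one, ← mul_assoc, mul_comm u, hpu, one_mul] at this
          exact this.symm
        rw [hu_eq]
        have hca : φ a ∈ B := by rw [eq_intCast φ]; exact intCast_mem B a
        have hcb : φ b ∈ B := by rw [eq_intCast φ]; exact intCast_mem B b
        exact B.add_mem hca (B.mul_mem hcb (B.mul_mem hxB (B.pow_mem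
          (by rw [eq_intCast φ]; exact intCast_mem B _) k)))
  -- a subring containing u is everything
  have full : ∀ B : Subring A, u ∈ B → B = ⊤ := by
    intro B huB
    rw [eq_top_iff]
    intro y _
    obtain ⟨⟨n, s⟩, hs⟩ := IsLocalization.surj (Submonoid.powers (p : ℤ)) y
    obtain ⟨k, hk⟩ := s.2
    have hy : y = φ n * u ^ k := by
      have hk' : ((p : ℤ)) ^ k = (s : ℤ) := hk
      have h2 : y * φ (p : ℤ) ^ k = φ n := by
        rw [← map_pow, hk']; exact hs
      calc y = y * (φ (p : ℤ) * u) ^ k := by rw [hpu, one_pow, mul_one]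
        _ = y * φ (p : ℤ) ^ k * u ^ k := by rw [mul_pow]; ring
        _ = φ n * u ^ k := by rw [h2]
    rw [hy]
    exact B.mul_mem (by rw [eq_intCast φ]; exact intCast_mem B n) (B.pow_mem huB k)
  constructor
  · intro htop
    have : TrivSqZeroExt.inl (M := M) u ∈ R := htop ▸ Subring.mem_top _
    rw [hR, Subring.mem_comap] at this
    simp only [TrivSqZeroExt.fstHom] at this
    exact hunr this
  · intro S hRS
    by_cases hall : ∀ x ∈ S, (TrivSqZeroExt.fst x) ∈ φ.range
    · left
      apply le_antisymm _ hRS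
      intro x hx
      rw [hR, Subring.mem_comap]
      exact hall x hx
    · right
      push_neg at hall
      obtain ⟨x, hxS, hxr⟩ := hall
      -- inr components are in R hence S
      have hinr : ∀ m : M, TrivSqZeroExt.inr (R := A) m ∈ S := by
        intro m
        apply hRS
        rw [hR, Subring.mem_comap]
        exact ⟨0, by simp⟩
      -- inl (fst x) ∈ S
      have hinl_x : TrivSqZeroExt.inl (TrivSqZeroExt.fst x) ∈ S := by
        have : x - TrivSqZeroExt.inr (TrivSqZeroExt.snd x) ∈ S :=
          S.sub_mem hxS (hinr _)
        simpa [TrivSqZeroExt.inl_fst_add_inr_snd_eq (R := A)] using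
          (show TrivSqZeroExt.inl (TrivSqZeroExt.fst x) =
            x - TrivSqZeroExt.inr (TrivSqZeroExt.snd x) by
              ext <;> simp) ▸ this
      -- the subring of A of elements a with inl a ∈ S
      set B : Subring A := S.comap (TrivSqZeroExt.inlHom A M) with hB
      have hxB : TrivSqZeroExt.fst x ∈ B := hinl_x
      obtain ⟨⟨n, s⟩, hs⟩ := IsLocalization.surj (Submonoid.powers (p : ℤ)) (TrivSqZeroExt.fst x)
      obtain ⟨k, hk⟩ := s.2
      have hBtop : B = ⊤ := by
        apply full
        apply key B k (TrivSqZeroExt.fst x) hxB hxr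
        refine ⟨n, ?_⟩
        have hk' : ((p : ℤ)) ^ k = (s : ℤ) := hk
        rw [← map_pow, hk']; exact hs.symm
      rw [eq_top_iff]
      intro t _
      have h1 : TrivSqZeroExt.inl (TrivSqZeroExt.fst t) ∈ S := by
        have : TrivSqZeroExt.fst t ∈ B := hBtop ▸ Subring.mem_top _
        exact this
      have h2 : TrivSqZeroExt.inr (R := A) (TrivSqZeroExt.snd t) ∈ S := hinr _
      have := S.add_mem h1 h2
      simpa [TrivSqZeroExt.inl_fst_add_inr_snd_eq] using this
end

section
/- Let R ⊆ T be Noetherian commutative rings such that there do not exist integrally dependent adjacent Noetherian rings between them, i.e., there are no rings A, B with R ⊆ A ⊊ B ⊆ T such that A and B are Noetherian, B is integral over A, and no ring lies strictly between A and B. Then R is integrally closed in T (every element of T integral over R lies in R), and consequently the nilradical of T is contained in R and equals the nilradical of R. -/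
/-- A subring `S` containing `R`, viewed as an `R`-submodule of `T`. -/
def subringToSubmodule {T : Type*} [CommRing T] (R S : Subring T) (hRS : R ≤ S) :
    Submodule ↥R T where
  carrier := S
  add_mem' := fun ha hb => S.add_mem ha hb
  zero_mem' := S.zero_mem
  smul_mem' := fun r t ht => by
    have : r • t = (r : T) * t := rfl
    rw [this]
    exact S.mul_mem (hRS r.2) ht

/-- An intermediate subring `R ≤ S` whose elements all lie in a Noetherian `R`-submodule `M`
is a Noetherian ring. -/
lemma noetherianRing_of_le {T : Type*} [CommRing T] (R : Subring T) [IsNoetherianRing ↥R]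
    (M : Submodule ↥R T) (hM : IsNoetherian ↥R ↥M)
    (S : Subring T) (hRS : R ≤ S) (hSM : ∀ t ∈ S, t ∈ M) :
    IsNoetherianRing ↥S := by
  let p := subringToSubmodule R S hRS
  have hple : p ≤ M := fun t ht => hSM t ht
  haveI : IsNoetherian ↥R ↥p := isNoetherian_of_le hple
  letI : Algebra ↥R ↥S := (Subring.inclusion hRS).toAlgebra
  let e : ↥p ≃ₗ[↥R] ↥S :=
    { toFun := fun a => ⟨a.1, a.2⟩
      invFun := fun a => ⟨a.1, a.2⟩
      left_inv := fun a => rfl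
      right_inv := fun a => rfl
      map_add' := fun a b => rfl
      map_smul' := fun r a => rfl }
  haveI : IsNoetherian ↥R ↥S := isNoetherian_of_linearEquiv e
  exact isNoetherianRing_iff.mpr (isNoetherian_of_tower ↥R this)

/-- If R ⊆ T are Noetherian commutative rings with no integrally dependent adjacent
Noetherian rings between them, then R is integrally closed in T, and the nilradical of T
is contained in R and equals the nilradical of R. -/
theorem integrally_closed_of_no_integrally_dependent_adjacent
    (T : Type*) [CommRing T] [IsNoetherianRing T] (R : Subring T) [IsNoetherianRing R]
    (h : ¬ ∃ A B : Subring T, R ≤ A ∧ A < B ∧ IsNoetherianRing A ∧ IsNoetherianRing B ∧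
      (∀ x ∈ B, IsIntegral A x) ∧
      (∀ S : Subring T, A ≤ S → S ≤ B → S = A ∨ S = B)) :
    (∀ x : T, IsIntegral R x → x ∈ R) ∧
    (∀ x ∈ nilradical T, x ∈ R) ∧
    (∀ x : R, x ∈ nilradical R ↔ (x : T) ∈ nilradical T) := by
  have main : ∀ x : T, IsIntegral R x → x ∈ R := by
    intro x hx
    by_contra hxR
    apply h
    set Ax := Algebra.adjoin ↥R ({x} : Set T) with hAx
    set M : Submodule ↥R T := Subalgebra.toSubmodule Ax with hM
    have hMfg : M.FG := hx.fg_adjoin_singleton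
    haveI hMN : IsNoetherian ↥R ↥M := isNoetherian_of_fg_of_noetherian M hMfg
    set B : Subring T := Ax.toSubring with hB
    have hBM : ∀ t, t ∈ B ↔ t ∈ M := fun t => Iff.rfl
    have hRB : R ≤ B := by
      intro r hr
      show r ∈ Ax
      exact Ax.algebraMap_mem ⟨r, hr⟩
    have hxB : x ∈ B := by
      show x ∈ Ax
      exact Algebra.subset_adjoin rfl
    have hRneB : R ≠ B := fun e => hxR (e ▸ hxB)
    set a : Set (Submodule ↥R ↥M) :=
      {q | ∃ S : Subring T, ∃ hRS : R ≤ S, S ≤ B ∧ S ≠ B ∧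
        q = Submodule.comap M.subtype (subringToSubmodule R S hRS)} with ha
    have hane : a.Nonempty := ⟨_, R, le_refl R, hRB, hRneB, rfl⟩
    obtain ⟨q₀, hq₀a, hq₀max⟩ := (set_has_maximal_iff_noetherian.mpr hMN) a hane
    obtain ⟨A, hRA, hAB, hAneB, hq₀⟩ := hq₀a
    refine ⟨A, B, hRA, lt_of_le_of_ne hAB hAneB, ?_, ?_, ?_, ?_⟩
    · exact noetherianRing_of_le R M hMN A hRA (fun t ht => (hBM t).mp (hAB ht))
    · exact noetherianRing_of_le R M hMN B hRB (fun t ht => (hBM t).mp ht)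
    · -- integrality of B over A
      intro y hy
      have hyR : IsIntegral ↥R y :=
        IsIntegral.of_mem_of_fg Ax hMfg y hy
      letI : Algebra ↥R ↥A := (Subring.inclusion hRA).toAlgebra
      haveI : IsScalarTower ↥R ↥A T := IsScalarTower.of_algebraMap_eq (fun r => rfl)
      exact IsIntegral.tower_top hyR
    · -- adjacency
      intro S hAS hSB
      by_cases hSeq : S = B
      · exact Or.inr hSeq
      · left
        have hRS : R ≤ S := le_trans hRA hAS
        set q : Submodule ↥R ↥M :=
          Submodule.comap M.subtype (subringToSubmodule R S hRS) with hq
        have hqa : q ∈ a := ⟨S, hRS, hSB, hSeq, rfl⟩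
        have hle : q₀ ≤ q := by
          rw [hq₀, hq]
          exact Submodule.comap_mono (fun t ht => hAS ht)
        have heq : q₀ = q := by
          by_contra hne
          exact hq₀max q hqa (lt_of_le_of_ne hle hne)
        ext t
        constructor
        · intro htS
          have htM : t ∈ M := (hBM t).mp (hSB htS)
          have : (⟨t, htM⟩ : ↥M) ∈ q := htS
          rw [← heq, hq₀] at this
          exact this
        · exact fun htA => hAS htA
  have nil : ∀ x ∈ nilradical T, x ∈ R := by
    intro x hx
    obtain ⟨n, hn⟩ := mem_nilradical.mp hx
    apply main
    refine ⟨Polynomial.X ^ (n + 1), Polynomial.monic_X_pow _, ?_⟩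
    simp [pow_succ, hn]
  refine ⟨main, nil, ?_⟩
  intro x
  rw [mem_nilradical, mem_nilradical]
  constructor
  · rintro ⟨n, hn⟩
    exact ⟨n, by exact_mod_cast congrArg Subtype.val hn⟩
  · rintro ⟨n, hn⟩
    exact ⟨n, Subtype.ext (by push_cast; exact hn)⟩
end

section
/- Let R ⊊ T be Noetherian integral domains such that there do not exist integrally dependent adjacent Noetherian rings between them, i.e., there are no rings A, B with R ⊆ A ⊊ B ⊆ T such that A and B are Noetherian, B is integral over A, and no ring lies strictly between A and B. Then the following are equivalent: (i) for all nonzero b, c ∈ R, if c/b ∈ T (i.e., there exists t ∈ T with b·t = c), then c/b ∈ R (there exists r ∈ R with b·r = c) or b/c ∈ R (there exists r ∈ R with c·r = b); (ii) both R and T are local rings. -/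
open Polynomial
set_option linter.unusedSectionVars false
set_option maxHeartbeats 4000000
set_option synthInstance.maxHeartbeats 400000

section Helpers

variable {T : Type*} [CommRing T] [IsDomain T]

lemma integral_mono_subring {A B : Subring T} (hAB : A ≤ B) {x : T}
    (hx : IsIntegral ↥A x) : IsIntegral ↥B x := by
  obtain ⟨f, hf, hev⟩ := hx
  refine ⟨f.map (Subring.inclusion hAB), hf.map _, ?_⟩
  rw [show (algebraMap ↥B T) = B.subtype from rfl, eval₂_map]
  have h2 : (B.subtype).comp (Subring.inclusion hAB) = A.subtype := by ext a; rfl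
  rw [h2]; exact hev

lemma noeth_of_equiv {α β : Type*} [Ring α] [Ring β] (e : α ≃+* β)
    (hα : IsNoetherianRing α) : IsNoetherianRing β :=
  isNoetherianRing_of_surjective α β e.toRingHom e.surjective

theorem mem_of_integral_over
    (R : Subring T) [IsNoetherianRing R]
    (h : ¬ ∃ A B : Subring T, R ≤ A ∧ A < B ∧ IsNoetherianRing A ∧ IsNoetherianRing B ∧
      (∀ x ∈ B, IsIntegral A x) ∧
      (∀ S : Subring T, A ≤ S → S ≤ B → S = A ∨ S = B))
    (A : Subring T) (hRA : R ≤ A) (hA : IsNoetherianRing A)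
    (u : T) (hu : IsIntegral A u) : u ∈ A := by
  by_contra hu'
  apply h
  letI := hA
  set S1 : Subalgebra ↥A T := Algebra.adjoin ↥A {u} with hS1
  have huS1 : u ∈ S1 := Algebra.subset_adjoin (Set.mem_singleton u)
  have hufin : (Subalgebra.toSubmodule S1).FG := hu.fg_adjoin_singleton
  haveI hMF : Module.Finite ↥A ↥S1 := ⟨(Submodule.fg_top _).2 hufin⟩
  haveI hNS1 : IsNoetherian ↥A ↥S1 := isNoetherian_of_isNoetherianRing_of_finite ↥A ↥S1
  set uu : ↥S1 := ⟨u, huS1⟩ with huu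
  have hbot : (⊥ : Subalgebra ↥A ↥S1) ≠ ⊤ := by
    intro hbt
    have hm : uu ∈ (⊥ : Subalgebra ↥A ↥S1) := hbt ▸ Algebra.mem_top
    rcases Algebra.mem_bot.1 hm with ⟨a, ha⟩
    apply hu'
    have hval : (algebraMap ↥A ↥S1 a : T) = u := congrArg Subtype.val ha
    rw [← hval]
    exact a.2
  have hwf := (set_has_maximal_iff_noetherian (R := ↥A) (M := ↥S1)).2 hNS1
  obtain ⟨N₀, hN₀mem, hmax⟩ := hwf
    {N | ∃ C : Subalgebra ↥A ↥S1, C ≠ ⊤ ∧ N = Subalgebra.toSubmodule C}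
    ⟨_, ⟨⊥, hbot, rfl⟩⟩
  obtain ⟨C', hC'top, rfl⟩ := hN₀mem
  have hCmax : ∀ D : Subalgebra ↥A ↥S1, C' ≤ D → D = C' ∨ D = ⊤ := by
    intro D hCD
    by_cases hD : D = ⊤
    · exact Or.inr hD
    · left
      have hle : Subalgebra.toSubmodule C' ≤ Subalgebra.toSubmodule D := hCD
      have hnlt : ¬ (Subalgebra.toSubmodule C' < Subalgebra.toSubmodule D) :=
        hmax _ ⟨D, hD, rfl⟩
      have heq : Subalgebra.toSubmodule D = Subalgebra.toSubmodule C' := by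
        by_contra hne
        exact hnlt (hle.lt_of_ne (fun e => hne e.symm))
      exact Subalgebra.toSubmodule_injective heq
  -- adjoin of uu is everything
  have hadj_top : Algebra.adjoin ↥A ({uu} : Set ↥S1) = ⊤ := by
    rw [eq_top_iff]
    rintro ⟨x, hx⟩ -
    induction hx using Algebra.adjoin_induction with
    | mem x hx =>
        have : x = u := hx
        subst this
        exact Algebra.subset_adjoin rfl
    | algebraMap r => exact Subalgebra.algebraMap_mem _ r
    | add x y hx hy ihx ihy => exact add_mem ihx ihy
    | mul x y hx hy ihx ihy => exact mul_mem ihx ihy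
  have huuC' : uu ∉ C' := by
    intro hmem
    have hle : Algebra.adjoin ↥A ({uu} : Set ↥S1) ≤ C' :=
      Algebra.adjoin_le (Set.singleton_subset_iff.2 hmem)
    rw [hadj_top] at hle
    exact hC'top (top_le_iff.1 hle)
  -- define the subrings
  set B : Subring T := S1.toSubring with hB
  set Cs : Subring T := (Subalgebra.map S1.val C').toSubring with hCs
  have hmemCs : ∀ x : T, x ∈ Cs ↔ ∃ y : ↥S1, y ∈ C' ∧ (y : T) = x := by
    intro x
    rw [hCs, Subalgebra.mem_toSubring, Subalgebra.mem_map]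
    rfl
  have hACs : A ≤ Cs := by
    intro x hx
    refine (hmemCs x).2 ⟨algebraMap ↥A ↥S1 ⟨x, hx⟩, Subalgebra.algebraMap_mem _ _, rfl⟩
  have hCsB : Cs ≤ B := by
    intro x hx
    rcases (hmemCs x).1 hx with ⟨y, _, rfl⟩
    exact y.2
  have huB : u ∈ B := huS1
  have huCs : u ∉ Cs := by
    intro hx
    rcases (hmemCs u).1 hx with ⟨y, hyC, hyval⟩
    have : y = uu := Subtype.ext hyval
    exact huuC' (this ▸ hyC)
  -- Noetherian
  have eSB : ↥S1 ≃+* ↥B :=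
  { toFun := fun x => ⟨x.1, Subalgebra.mem_toSubring.2 x.2⟩
    invFun := fun x => ⟨x.1, Subalgebra.mem_toSubring.1 x.2⟩
    left_inv := fun x => rfl
    right_inv := fun x => rfl
    map_mul' := fun x y => rfl
    map_add' := fun x y => rfl }
  have hNRS1 : IsNoetherianRing ↥S1 := isNoetherian_of_tower ↥A hNS1
  have hNB : IsNoetherianRing ↥B := noeth_of_equiv eSB hNRS1
  -- C' is Noetherian as a ring
  haveI hNC'mod : IsNoetherian ↥A ↥(Subalgebra.toSubmodule C') := isNoetherian_submodule' _
  have eC : ↥(Subalgebra.toSubmodule C') ≃ₗ[↥A] ↥C' :=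
  { toFun := fun x => ⟨x.1, x.2⟩
    invFun := fun x => ⟨x.1, x.2⟩
    left_inv := fun x => rfl
    right_inv := fun x => rfl
    map_add' := fun x y => rfl
    map_smul' := fun c x => rfl }
  haveI hNC'mod2 : IsNoetherian ↥A ↥C' := isNoetherian_of_linearEquiv eC
  have hNC'ring : IsNoetherianRing ↥C' := isNoetherian_of_tower ↥A hNC'mod2
  have eCCs : ↥C' ≃+* ↥Cs := by
    refine (Subalgebra.equivMapOfInjective C' S1.val Subtype.val_injective).toRingEquiv.trans ?_
    exact
    { toFun := fun x => ⟨x.1, Subalgebra.mem_toSubring.2 x.2⟩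
      invFun := fun x => ⟨x.1, Subalgebra.mem_toSubring.1 x.2⟩
      left_inv := fun x => rfl
      right_inv := fun x => rfl
      map_mul' := fun x y => rfl
      map_add' := fun x y => rfl }
  have hNCs : IsNoetherianRing ↥Cs := @noeth_of_equiv ↥C' ↥Cs C'.toRing _ eCCs hNC'ring
  -- integrality of B over Cs
  have hint : ∀ x ∈ B, IsIntegral ↥Cs x := by
    intro x hx
    have hxS1 : x ∈ S1 := Subalgebra.mem_toSubring.1 hx
    have h1 : IsIntegral ↥A ((⟨x, hxS1⟩ : ↥S1)) := IsIntegral.of_finite ↥A _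
    have h2 : IsIntegral ↥A (S1.val ⟨x, hxS1⟩) := h1.map S1.val
    exact integral_mono_subring hACs h2
  -- adjacency
  have hadj : ∀ S : Subring T, Cs ≤ S → S ≤ B → S = Cs ∨ S = B := by
    intro S hCsS hSB
    set D : Subalgebra ↥A ↥S1 :=
    { carrier := {y : ↥S1 | (y : T) ∈ S}
      mul_mem' := fun {x} {y} hx hy => by
        show ((x * y : ↥S1) : T) ∈ S
        push_cast
        exact mul_mem hx hy
      one_mem' := by
        show ((1 : ↥S1) : T) ∈ S
        push_cast
        exact one_mem S
      add_mem' := fun {x} {y} hx hy => by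
        show ((x + y : ↥S1) : T) ∈ S
        push_cast
        exact add_mem hx hy
      zero_mem' := by
        show ((0 : ↥S1) : T) ∈ S
        push_cast
        exact zero_mem S
      algebraMap_mem' := fun a => by
        show ((algebraMap ↥A ↥S1 a : ↥S1) : T) ∈ S
        exact hCsS (hACs a.2) } with hD
    have hCD : C' ≤ D := by
      intro y hy
      exact hCsS ((hmemCs _).2 ⟨y, hy, rfl⟩)
    rcases hCmax D hCD with hDC | hDT
    · left
      apply le_antisymm _ hCsS
      intro x hxS
      have hxB : x ∈ B := hSB hxS
      have hxS1 : x ∈ S1 := Subalgebra.mem_toSubring.1 hxB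
      have : (⟨x, hxS1⟩ : ↥S1) ∈ D := hxS
      rw [hDC] at this
      exact (hmemCs x).2 ⟨_, this, rfl⟩
    · right
      apply le_antisymm hSB
      intro x hxB
      have hxS1 : x ∈ S1 := Subalgebra.mem_toSubring.1 hxB
      have : (⟨x, hxS1⟩ : ↥S1) ∈ D := by rw [hDT]; exact Algebra.mem_top
      exact this
  exact ⟨Cs, B, hRA.trans hACs, lt_of_le_of_ne hCsB (fun e => huCs (e ▸ huB)),
    hNCs, hNB, hint, hadj⟩

/-- abbreviation for the no-adjacent-pairs hypothesis -/
def NoAdj (R : Subring T) : Prop :=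
  ¬ ∃ A B : Subring T, R ≤ A ∧ A < B ∧ IsNoetherianRing A ∧ IsNoetherianRing B ∧
      (∀ x ∈ B, IsIntegral A x) ∧
      (∀ S : Subring T, A ≤ S → S ≤ B → S = A ∨ S = B)

lemma noeth_toSubring {R : Subring T} {S : Subalgebra ↥R T} (hS : IsNoetherianRing ↥S) :
    IsNoetherianRing ↥S.toSubring :=
  noeth_of_equiv
    { toFun := fun a => ⟨a.1, Subalgebra.mem_toSubring.2 a.2⟩
      invFun := fun a => ⟨a.1, Subalgebra.mem_toSubring.1 a.2⟩
      left_inv := fun _ => rfl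
      right_inv := fun _ => rfl
      map_mul' := fun _ _ => rfl
      map_add' := fun _ _ => rfl } hS

lemma noeth_adjoin_singleton (R : Subring T) [IsNoetherianRing R] (y : T) :
    IsNoetherianRing ↥(Algebra.adjoin ↥R {y} : Subalgebra ↥R T) := by
  haveI : IsNoetherianRing (Polynomial ↥R) := Polynomial.isNoetherianRing
  rw [Algebra.adjoin_singleton_eq_range_aeval]
  exact isNoetherianRing_of_surjective (Polynomial ↥R) _ (aeval y).rangeRestrict.toRingHom
    (AlgHom.rangeRestrict_surjective _)

/-- sparse representation : every element of T is a polynomial in its square -/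
lemma exists_sparse_rep (R : Subring T) [IsNoetherianRing R] (h : NoAdj R) (x : T) :
    ∃ p : Polynomial ↥R, aeval (x^2) p = x := by
  set A2 : Subring T := (Algebra.adjoin ↥R {x^2} : Subalgebra ↥R T).toSubring with hA2
  have hRA2 : R ≤ A2 := by
    intro r hr
    exact Subalgebra.mem_toSubring.2 (Subalgebra.algebraMap_mem _ (⟨r, hr⟩ : ↥R))
  have hNA2 : IsNoetherianRing ↥A2 := noeth_toSubring (noeth_adjoin_singleton R (x^2))
  have hx2 : x^2 ∈ A2 := Subalgebra.mem_toSubring.2 (Algebra.subset_adjoin rfl)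
  have hint : IsIntegral ↥A2 x := by
    refine ⟨X^2 - C ⟨x^2, hx2⟩, monic_X_pow_sub_C _ two_ne_zero, ?_⟩
    have : (algebraMap ↥A2 T) ⟨x^2, hx2⟩ = x^2 := rfl
    simp [this]
  have hx : x ∈ A2 := mem_of_integral_over R h A2 hRA2 hNA2 x hint
  have hx' : x ∈ (Polynomial.aeval (x^2) : Polynomial ↥R →ₐ[↥R] T).range := by
    rw [← Algebra.adjoin_singleton_eq_range_aeval]
    exact Subalgebra.mem_toSubring.1 hx
  obtain ⟨p, hp⟩ := hx'
  exact ⟨p, hp⟩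

/-- every element of T kills a polynomial over R with unit linear coefficient -/
lemma exists_unit_coeff_rel (R : Subring T) [IsNoetherianRing R] (h : NoAdj R) (x : T) :
    ∃ f : Polynomial ↥R, aeval x f = 0 ∧ IsUnit (f.coeff 1) := by
  obtain ⟨p, hp⟩ := exists_sparse_rep R h x
  refine ⟨p.comp (X^2) - X, ?_, ?_⟩
  · rw [map_sub, aeval_comp]
    simp [hp]
  · have hc : (p.comp (X^2 : Polynomial ↥R)).coeff 1 = 0 := by
      rw [comp_eq_sum_left, Polynomial.sum_def, finset_sum_coeff]
      apply Finset.sum_eq_zero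
      intro i _
      rw [coeff_C_mul, ← pow_mul, coeff_X_pow, if_neg (by omega), mul_zero]
    rw [coeff_sub, hc, coeff_X_one, zero_sub]
    exact isUnit_one.neg

/-- every element of T is a fraction over R -/
lemma exists_R_multiple (R : Subring T) [IsNoetherianRing R] (h : NoAdj R) (u : T) :
    ∃ b c : ↥R, b ≠ 0 ∧ (b : T) * u = (c : T) := by
  obtain ⟨f, hf0, hfu⟩ := exists_unit_coeff_rel R h u
  have hfne : f ≠ 0 := by
    intro e
    rw [e] at hfu
    simp at hfu
  have hinj : ∀ y : ↥R, algebraMap ↥R T y = 0 → y = 0 := fun y hy => Subtype.ext hy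
  have hz := integralNormalization_aeval_eq_zero hf0 hinj
  have hint : IsIntegral ↥R ((algebraMap ↥R T f.leadingCoeff) * u) :=
    ⟨f.integralNormalization, monic_integralNormalization hfne, by rw [← aeval_def]; exact hz⟩
  have hmem := mem_of_integral_over R (h) R le_rfl inferInstance _ hint
  exact ⟨f.leadingCoeff, ⟨_, hmem⟩, leadingCoeff_ne_zero.2 hfne, rfl⟩

lemma comparability (R : Subring T) [IsNoetherianRing R] (h : NoAdj R)
    (hloc : IsLocalRing ↥R) (b c : ↥R) (hb : b ≠ 0)
    (ht : ∃ t : T, (b : T) * t = (c : T)) :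
    (∃ r : ↥R, b * r = c) ∨ (∃ r : ↥R, c * r = b) := by
  obtain ⟨t, htbc⟩ := ht
  by_cases htR : t ∈ R
  · exact Or.inl ⟨⟨t, htR⟩, Subtype.ext htbc⟩
  classical
  have hex : ∃ n : ℕ, ∃ f : Polynomial ↥R,
      aeval t f = 0 ∧ (∃ i, IsUnit (f.coeff i)) ∧ f.natDegree = n := by
    obtain ⟨f, h1, h2⟩ := exists_unit_coeff_rel R h t
    exact ⟨f.natDegree, f, h1, ⟨1, h2⟩, rfl⟩
  set d := Nat.find hex with hdd
  obtain ⟨f, hf0, ⟨j, hj⟩, hfd⟩ := Nat.find_spec hex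
  rw [← hdd] at hfd
  have hfne : f ≠ 0 := by
    intro e; rw [e] at hj; simp at hj
  have hdpos : 1 ≤ d := by
    by_contra hd0
    push_neg at hd0
    have hd0' : d = 0 := by omega
    rw [hd0'] at hfd
    have hC : f = C (f.coeff 0) := Polynomial.eq_C_of_natDegree_eq_zero hfd
    rw [hC] at hf0
    have h0 : (algebraMap ↥R T) (f.coeff 0) = 0 := by simpa using hf0
    have hc0 : f.coeff 0 = 0 := Subtype.ext h0
    apply hfne
    rw [hC, hc0, map_zero]
  -- the leading coefficient times t lies in R
  have hlc : f.leadingCoeff = f.coeff d := by rw [Polynomial.leadingCoeff, hfd]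
  have hinj : ∀ y : ↥R, algebraMap ↥R T y = 0 → y = 0 := fun y hy => Subtype.ext hy
  have hz := integralNormalization_aeval_eq_zero hf0 hinj
  have hint : IsIntegral ↥R ((algebraMap ↥R T f.leadingCoeff) * t) :=
    ⟨f.integralNormalization, monic_integralNormalization hfne, by rw [← aeval_def]; exact hz⟩
  have hyR : ((algebraMap ↥R T) (f.coeff d) * t) ∈ R := by
    have := mem_of_integral_over R h R le_rfl inferInstance _ hint
    rwa [hlc] at this
  set y' : ↥R := ⟨(algebraMap ↥R T) (f.coeff d) * t, hyR⟩ with hy'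
  have hyval : (algebraMap ↥R T) y' = (algebraMap ↥R T) (f.coeff d) * t := rfl
  -- the reduced relation
  set g : Polynomial ↥R := f - C (f.coeff d) * X^d + C y' * X^(d-1) with hgdef
  have hg0 : aeval t g = 0 := by
    have hdd1 : d - 1 + 1 = d := Nat.succ_pred_eq_of_pos hdpos
    have hpow : t * t^(d-1) = t^d := by rw [← pow_succ', hdd1]
    rw [hgdef, map_add, map_sub, map_mul, map_mul, aeval_C, aeval_C, map_pow, map_pow,
      aeval_X, hf0, hyval]
    rw [zero_sub, mul_assoc, hpow]
    ring
  have hgle : g.natDegree ≤ d - 1 := by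
    rw [Polynomial.natDegree_le_iff_coeff_eq_zero]
    intro m hm
    have hmd : d ≤ m := by omega
    have hne1 : m ≠ d - 1 := by omega
    rw [hgdef, coeff_add, coeff_sub, coeff_C_mul, coeff_C_mul, coeff_X_pow, coeff_X_pow,
      if_neg hne1, mul_zero, add_zero]
    rcases eq_or_lt_of_le hmd with hmd' | hmd'
    · rw [← hmd', if_pos rfl, mul_one, sub_self]
    · rw [if_neg (by omega), mul_zero, sub_zero]
      exact coeff_eq_zero_of_natDegree_lt (by omega : f.natDegree < m)
  have hnog : ∀ i, ¬ IsUnit (g.coeff i) := by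
    intro i hi
    have hP : ∃ f' : Polynomial ↥R, aeval t f' = 0 ∧ (∃ i, IsUnit (f'.coeff i)) ∧
        f'.natDegree = g.natDegree := ⟨g, hg0, ⟨i, hi⟩, rfl⟩
    exact Nat.find_min hex (by omega : g.natDegree < d) hP
  have hglow : ∀ i, i < d - 1 → g.coeff i = f.coeff i := by
    intro i hi
    rw [hgdef, coeff_add, coeff_sub, coeff_C_mul, coeff_C_mul, coeff_X_pow, coeff_X_pow,
      if_neg (by omega : ¬ i = d), if_neg (by omega : ¬ i = d - 1), mul_zero, mul_zero,
      sub_zero, add_zero]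
  have hgd1 : g.coeff (d-1) = f.coeff (d-1) + y' := by
    rw [hgdef, coeff_add, coeff_sub, coeff_C_mul, coeff_C_mul, coeff_X_pow, coeff_X_pow,
      if_neg (by omega : ¬ d - 1 = d), if_pos rfl, mul_zero, sub_zero, mul_one]
  -- analyze where the unit coefficient of f sits
  have hjd : j ≤ d := by
    by_contra hjd
    push_neg at hjd
    rw [coeff_eq_zero_of_natDegree_lt (by omega : f.natDegree < j)] at hj
    exact (hj.ne_zero rfl).elim
  have hyvalc : ((y' : ↥R) : T) = ((f.coeff d : ↥R) : T) * t := rfl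
  rcases eq_or_lt_of_le hjd with hjd' | hjlt
  · -- j = d : leading coefficient is a unit, so t ∈ R, contradiction
    exfalso
    apply htR
    rw [hjd'] at hj
    obtain ⟨v, hv⟩ := hj
    have hinv : ((v⁻¹ : (↥R)ˣ) : ↥R) * f.coeff d = 1 := by
      rw [← hv]; exact v.inv_mul
    have hinvT : (((v⁻¹ : (↥R)ˣ) : ↥R) : T) * ((f.coeff d : ↥R) : T) = 1 := by
      exact_mod_cast hinv
    have ht' : (((((v⁻¹ : (↥R)ˣ) : ↥R) * y') : ↥R) : T) = t := by
      push_cast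
      rw [hyvalc,
        ← mul_assoc, hinvT, one_mul]
    rw [← ht']
    exact Subtype.coe_prop _
  · -- j < d
    rcases eq_or_lt_of_le (by omega : j ≤ d - 1) with hjd1 | hjlt1
    · -- j = d - 1 : then y' must be a unit, giving c ∣ b
      have hnu : ¬ IsUnit (g.coeff (d-1)) := hnog _
      rw [hgd1] at hnu
      have hyunit : IsUnit y' := by
        by_contra hyu
        apply hnu
        have hfj : IsUnit (f.coeff (d-1)) := by rw [← hjd1]; exact hj
        by_contra hsum
        have h1 : (f.coeff (d-1) + y') ∈ nonunits ↥R := hsum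
        have h2 : (-y') ∈ nonunits ↥R := by
          simpa [mem_nonunits_iff] using hyu
        have h3 := IsLocalRing.nonunits_add h1 h2
        rw [add_neg_cancel_right] at h3
        exact h3 hfj
      right
      obtain ⟨w, hw⟩ := hyunit
      have hy'w : ((y' : ↥R) : T) * (((w⁻¹ : (↥R)ˣ) : ↥R) : T) = 1 := by
        have hh : y' * ((w⁻¹ : (↥R)ˣ) : ↥R) = 1 := by rw [← hw]; exact w.mul_inv
        exact_mod_cast hh
      refine ⟨f.coeff d * ((w⁻¹ : (↥R)ˣ) : ↥R), Subtype.ext ?_⟩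
      push_cast
      calc (c:T) * (((f.coeff d : ↥R) : T) * (((w⁻¹ : (↥R)ˣ) : ↥R) : T))
          = ((b:T) * t) * (((f.coeff d : ↥R) : T) * (((w⁻¹ : (↥R)ˣ) : ↥R) : T)) := by
            rw [htbc]
        _ = (b:T) * ((((f.coeff d : ↥R) : T) * t) * (((w⁻¹ : (↥R)ˣ) : ↥R) : T)) := by ring
        _ = (b:T) * (((y' : ↥R) : T) * (((w⁻¹ : (↥R)ˣ) : ↥R) : T)) := by rw [← hyvalc]
        _ = (b:T) := by rw [hy'w, mul_one]
    · -- j < d - 1 : g has a unit coefficient, contradiction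
      exfalso
      exact hnog j (by rw [hglow j hjlt1]; exact hj)

lemma local_R_of_comparability (R : Subring T) [IsNoetherianRing R] (h : NoAdj R)
    (hRT : R ≠ ⊤)
    (hcomp : ∀ b c : ↥R, b ≠ 0 → c ≠ 0 → (∃ t : T, (b:T)*t = (c:T)) →
      (∃ r : ↥R, b * r = c) ∨ (∃ r : ↥R, c * r = b)) :
    IsLocalRing ↥R := by
  obtain ⟨τ, hτ⟩ : ∃ τ : T, τ ∉ R := by
    by_contra hall
    push_neg at hall
    exact hRT (by ext x; simpa using hall x)
  have hτ0 : τ ≠ 0 := fun e => hτ (e ▸ R.zero_mem)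
  obtain ⟨b0, c0, hb0, hbc0⟩ := exists_R_multiple R h τ
  have hc0 : c0 ≠ 0 := by
    intro e
    rw [e] at hbc0
    have h0 : ((b0 : ↥R) : T) * τ = 0 := by simpa using hbc0
    rcases mul_eq_zero.1 h0 with h1 | h1
    · exact hb0 (Subtype.ext h1)
    · exact hτ0 h1
  -- produce s with s⁻¹ = τ in T
  obtain ⟨s, hs0, hsu, hsτ⟩ : ∃ s : ↥R, s ≠ 0 ∧ ¬ IsUnit s ∧ (s:T) * τ = 1 := by
    rcases hcomp b0 c0 hb0 hc0 ⟨τ, hbc0⟩ with ⟨r, hr⟩ | ⟨s, hs⟩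
    · exfalso
      apply hτ
      have hval : (b0:T) * (r:T) = (b0:T) * τ := by
        rw [hbc0]
        exact_mod_cast congrArg (Subtype.val) hr
      have : (r : T) = τ :=
        mul_left_cancel₀ (fun e => hb0 (Subtype.ext e)) hval
      rw [← this]; exact r.2
    · have hval : (c0:T) * (s:T) = (b0:T) := congrArg Subtype.val hs
      have hsτ : (s:T) * τ = 1 := by
        have h2 : (c0:T) * ((s:T) * τ) = (c0:T) * 1 := by
          rw [mul_one, ← mul_assoc, hval, hbc0]
        exact mul_left_cancel₀ (fun e => hc0 (Subtype.ext e)) h2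
      refine ⟨s, ?_, ?_, hsτ⟩
      · intro e
        rw [e] at hsτ
        simp at hsτ
      · intro hu
        apply hτ
        obtain ⟨u, hu'⟩ := hu
        have h3 : τ = ((u⁻¹ : (↥R)ˣ) : ↥R) := by
          have h4 : (((u⁻¹ : (↥R)ˣ) : ↥R) : T) * ((s:T) * τ) = (((u⁻¹ : (↥R)ˣ) : ↥R) : T) := by
            rw [hsτ, mul_one]
          rw [← mul_assoc] at h4
          have h5 : (((u⁻¹ : (↥R)ˣ) : ↥R) : T) * (s:T) = 1 := by
            have h6 : ((u⁻¹ : (↥R)ˣ) : ↥R) * s = 1 := by rw [← hu']; exact u.inv_mul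
            exact_mod_cast h6
          rw [h5, one_mul] at h4
          exact h4
        rw [h3]; exact Subtype.coe_prop _
  -- key divisibility claim
  have hkey : ∀ z : ↥R, z ≠ 0 → ¬ IsUnit z → ∃ k : ℕ, 1 ≤ k ∧ s ∣ z ^ k := by
    intro z hz0 hzu
    by_contra hnone
    push_neg at hnone
    have hall : ∀ k : ℕ, ∃ r : ↥R, z ^ (k+1) * r = s := by
      intro k
      have hzk0 : z ^ (k+1) ≠ 0 := pow_ne_zero _ hz0
      have hrt : ∃ t : T, (s:T) * t = ((z^(k+1) : ↥R) : T) :=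
        ⟨((z^(k+1) : ↥R) : T) * τ, by
          rw [← mul_assoc, mul_comm (s:T), mul_assoc, hsτ, mul_one]⟩
      rcases hcomp s (z^(k+1)) hs0 hzk0 hrt with ⟨r, hr⟩ | ⟨r, hr⟩
      · exact absurd ⟨r, hr.symm⟩ (hnone (k+1) (by omega))
      · exact ⟨r, hr⟩
    choose r hr using hall
    have hstep : ∀ k, r k = z * r (k+1) := by
      intro k
      have h1 : z ^ (k+1) * r k = z ^ (k+2) * r (k+1) := by rw [hr, hr]
      have h2 : z ^ (k+1) * r k = z ^ (k+1) * (z * r (k+1)) := by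
        rw [h1]; ring
      exact mul_left_cancel₀ (pow_ne_zero _ hz0) h2
    have hrk0 : ∀ k, r k ≠ 0 := by
      intro k e
      apply hs0
      rw [← hr k, e, mul_zero]
    have hmono : Monotone (fun k => Ideal.span ({r k} : Set ↥R)) := by
      apply monotone_nat_of_le_succ
      intro k
      rw [Ideal.span_singleton_le_span_singleton]
      exact ⟨z, by rw [hstep k]; ring⟩
    obtain ⟨n, hn⟩ := monotone_stabilizes_iff_noetherian.2 inferInstance
      ⟨fun k => Ideal.span ({r k} : Set ↥R), hmono⟩
    have h1 : r (n+1) ∈ Ideal.span ({r n} : Set ↥R) := by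
      have h5 : Ideal.span ({r n} : Set ↥R) = Ideal.span ({r (n+1)} : Set ↥R) :=
        hn (n+1) (by omega)
      have hm : r (n+1) ∈ Ideal.span ({r (n+1)} : Set ↥R) := Ideal.subset_span rfl
      rw [← h5] at hm
      exact hm
    obtain ⟨ρ, hρ⟩ := Ideal.mem_span_singleton'.1 h1
    have h2 : r (n+1) * (1 - ρ * z) = 0 := by
      have : r (n+1) = ρ * (z * r (n+1)) := by rw [← hstep n, hρ]
      calc r (n+1) * (1 - ρ * z) = r (n+1) - ρ * (z * r (n+1)) := by ring
        _ = 0 := by rw [← this]; ring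
    rcases mul_eq_zero.1 h2 with h3 | h3
    · exact hrk0 _ h3
    · apply hzu
      have h4 : ρ * z = 1 := by
        have := sub_eq_zero.1 h3
        exact this.symm
      exact IsUnit.of_mul_eq_one _ (by rw [mul_comm]; exact h4)
  -- nonunits are closed under addition
  refine IsLocalRing.of_nonunits_add ?_
  intro x y hx hy
  rw [mem_nonunits_iff] at hx hy ⊢
  intro hxy
  obtain ⟨v, hv⟩ := hxy
  set x' := x * ((v⁻¹ : (↥R)ˣ) : ↥R) with hx'
  set y' := y * ((v⁻¹ : (↥R)ˣ) : ↥R) with hy'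
  have hsum : x' + y' = 1 := by
    rw [hx', hy', ← add_mul, ← hv]
    exact v.mul_inv
  have hx'u : ¬ IsUnit x' := by
    intro hu
    exact hx (by
      have : x = x' * v := by rw [hx', mul_assoc, Units.inv_mul, mul_one]
      rw [this]
      exact hu.mul v.isUnit)
  have hy'u : ¬ IsUnit y' := by
    intro hu
    exact hy (by
      have : y = y' * v := by rw [hy', mul_assoc, Units.inv_mul, mul_one]
      rw [this]
      exact hu.mul v.isUnit)
  have hx'0 : x' ≠ 0 := by
    intro e
    rw [e, zero_add] at hsum
    exact hy'u (hsum ▸ isUnit_one)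
  have hy'0 : y' ≠ 0 := by
    intro e
    rw [e, add_zero] at hsum
    exact hx'u (hsum ▸ isUnit_one)
  obtain ⟨k, hk1, hkx⟩ := hkey x' hx'0 hx'u
  obtain ⟨l, hl1, hly⟩ := hkey y' hy'0 hy'u
  have hdvd : s ∣ (x' + y') ^ (k + l) := by
    rw [add_pow]
    apply Finset.dvd_sum
    intro i hi
    rcases le_or_gt k i with hik | hik
    · exact dvd_mul_of_dvd_left (dvd_mul_of_dvd_left (hkx.trans (pow_dvd_pow x' hik)) _) _
    · have hl2 : l ≤ k + l - i := by omega
      exact dvd_mul_of_dvd_left (dvd_mul_of_dvd_right (hly.trans (pow_dvd_pow y' hl2)) _) _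
  rw [hsum, one_pow] at hdvd
  exact hsu (isUnit_of_dvd_one hdvd)

lemma local_T_of_comparability (R : Subring T) [IsNoetherianRing R] (h : NoAdj R)
    (hRloc : IsLocalRing ↥R)
    (hcomp : ∀ b c : ↥R, b ≠ 0 → c ≠ 0 → (∃ t : T, (b:T)*t = (c:T)) →
      (∃ r : ↥R, b * r = c) ∨ (∃ r : ↥R, c * r = b)) :
    IsLocalRing T := by
  have hkey : ∀ z : T, z ≠ 0 → ¬ IsUnit z → z ∈ R := by
    intro z hz0 hzu
    obtain ⟨b, c, hb, hbc⟩ := exists_R_multiple R h z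
    have hc : c ≠ 0 := by
      intro e
      rw [e] at hbc
      have h0 : ((b : ↥R) : T) * z = 0 := by simpa using hbc
      rcases mul_eq_zero.1 h0 with h1 | h1
      · exact hb (Subtype.ext h1)
      · exact hz0 h1
    rcases hcomp b c hb hc ⟨z, hbc⟩ with ⟨r, hr⟩ | ⟨r, hr⟩
    · have hval : (b:T) * (r:T) = (b:T) * z := by
        rw [hbc]
        exact_mod_cast congrArg (Subtype.val) hr
      have : (r : T) = z :=
        mul_left_cancel₀ (fun e => hb (Subtype.ext e)) hval
      rw [← this]; exact r.2
    · exfalso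
      apply hzu
      have hval : (c:T) * (r:T) = (b:T) := congrArg Subtype.val hr
      have hz1 : z * (r:T) = 1 := by
        have h2 : (b:T) * (z * (r:T)) = (b:T) * 1 := by
          rw [mul_one, ← mul_assoc, hbc, hval]
        exact mul_left_cancel₀ (fun e => hb (Subtype.ext e)) h2
      exact IsUnit.of_mul_eq_one _ hz1
  refine IsLocalRing.of_nonunits_add ?_
  intro x y hx hy
  rw [mem_nonunits_iff] at hx hy ⊢
  intro hxy
  obtain ⟨v, hv⟩ := hxy
  have hx0 : x ≠ 0 := by
    intro e
    apply hy
    rw [e, zero_add] at hv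
    exact ⟨v, hv⟩
  have hy0 : y ≠ 0 := by
    intro e
    apply hx
    rw [e, add_zero] at hv
    exact ⟨v, hv⟩
  set x' := x * ((v⁻¹ : Tˣ) : T) with hx'
  set y' := y * ((v⁻¹ : Tˣ) : T) with hy'
  have hsum : x' + y' = 1 := by
    rw [hx', hy', ← add_mul, ← hv]
    exact v.mul_inv
  have hx'u : ¬ IsUnit x' := by
    intro hu
    exact hx (by
      have : x = x' * v := by rw [hx', mul_assoc, Units.inv_mul, mul_one]
      rw [this]
      exact hu.mul v.isUnit)
  have hy'u : ¬ IsUnit y' := by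
    intro hu
    exact hy (by
      have : y = y' * v := by rw [hy', mul_assoc, Units.inv_mul, mul_one]
      rw [this]
      exact hu.mul v.isUnit)
  have hx'0 : x' ≠ 0 := by
    intro e
    rw [e, zero_add] at hsum
    exact hy'u (hsum ▸ isUnit_one)
  have hy'0 : y' ≠ 0 := by
    intro e
    rw [e, add_zero] at hsum
    exact hx'u (hsum ▸ isUnit_one)
  have hx'R : x' ∈ R := hkey x' hx'0 hx'u
  have hy'R : y' ∈ R := hkey y' hy'0 hy'u
  have h1 : (⟨x', hx'R⟩ : ↥R) ∈ nonunits ↥R := by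
    rw [mem_nonunits_iff]
    intro hu
    exact hx'u (hu.map R.subtype)
  have h2 : (⟨y', hy'R⟩ : ↥R) ∈ nonunits ↥R := by
    rw [mem_nonunits_iff]
    intro hu
    exact hy'u (hu.map R.subtype)
  have h3 := IsLocalRing.nonunits_add h1 h2
  have h4 : (⟨x', hx'R⟩ : ↥R) + ⟨y', hy'R⟩ = 1 := Subtype.ext (by simpa using hsum)
  rw [h4] at h3
  exact (mem_nonunits_iff.1 h3) isUnit_one

end Helpers

/-- Let R ⊊ T be Noetherian domains with no integrally dependent adjacent Noetherian
rings between them. Then the divisibility comparability condition (i) holds for all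
nonzero b, c ∈ R iff both R and T are local rings. -/
theorem comparability_iff_local
    (T : Type*) [CommRing T] [IsDomain T] [IsNoetherianRing T]
    (R : Subring T) [IsNoetherianRing R] (hRT : R ≠ ⊤)
    (h : ¬ ∃ A B : Subring T, R ≤ A ∧ A < B ∧ IsNoetherianRing A ∧ IsNoetherianRing B ∧
      (∀ x ∈ B, IsIntegral A x) ∧
      (∀ S : Subring T, A ≤ S → S ≤ B → S = A ∨ S = B)) :
    ((∀ b c : R, b ≠ 0 → c ≠ 0 → (∃ t : T, (b : T) * t = (c : T)) →
        (∃ r : R, b * r = c) ∨ (∃ r : R, c * r = b)) ↔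
      (IsLocalRing R ∧ IsLocalRing T)) := by
  have hna : NoAdj R := h
  constructor
  · intro hcomp
    have hR := local_R_of_comparability R hna hRT hcomp
    exact ⟨hR, local_T_of_comparability R hna hR hcomp⟩
  · rintro ⟨hR, hT⟩ b c hb hc ht
    exact comparability R hna hR b c hb ht
end

section
/- Let R ⊆ T be Noetherian integral domains such that (R,T) is a normal pair, i.e., every ring S with R ⊆ S ⊆ T is integrally closed in T. Assume moreover that R is a local ring. Then for all nonzero b, c ∈ R with c/b ∈ T (i.e., there exists t ∈ T with b·t = c), either c/b ∈ R (there exists r ∈ R with b·r = c) or b/c ∈ R (there exists r ∈ R with c·r = b). -/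
open Polynomial

/-- Key lemma: if `R` is local and integrally closed in the domain `T`, and `t : T`
is a root of a polynomial over `R` whose coefficient at `X^1` is `-1`, then
`t ∈ R` or `t` has an inverse lying in `R`. Proved by induction on a degree bound. -/
theorem key_reduction {T : Type*} [CommRing T] [IsDomain T] (R : Subring T)
    [IsLocalRing R] (hR : ∀ x : T, IsIntegral R x → x ∈ R) (t : T) :
    ∀ d : ℕ, 2 ≤ d → ∀ q : Polynomial R, q.natDegree ≤ d → q.coeff 1 = -1 →
      Polynomial.aeval t q = 0 → t ∈ R ∨ ∃ r : R, t * (r : T) = 1 := by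
  have mem : ∀ (q : Polynomial R) (k : ℕ), q.natDegree ≤ k →
      Polynomial.aeval t q = 0 → ((q.coeff k : T) * t) ∈ R := by
    intro q k hk h0
    by_cases hc : q.coeff k = 0
    · rw [hc]
      push_cast
      rw [zero_mul]
      exact R.zero_mem
    · have hdeg : q.natDegree = k := le_antisymm hk (le_natDegree_of_ne_zero hc)
      have hint : IsIntegral R (q.leadingCoeff • t) := isIntegral_leadingCoeff_smul q t h0
      have hlc : q.leadingCoeff = q.coeff k := by rw [Polynomial.leadingCoeff, hdeg]
      rw [hlc] at hint
      have : (q.coeff k : T) * t = (q.coeff k) • t := by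
        rw [Algebra.smul_def]; rfl
      rw [this]
      exact hR _ hint
  intro d hd
  induction d, hd using Nat.le_induction with
  | base =>
    intro q hdeg h1 h0
    -- quadratic case
    have heq : (q.coeff 2 : T) * t ^ 2 + (q.coeff 1 : T) * t ^ 1 + (q.coeff 0 : T) * t ^ 0 = 0 := by
      have hlt : q.natDegree < 3 := lt_of_le_of_lt hdeg (by norm_num)
      have := Polynomial.aeval_eq_sum_range' hlt t
      rw [h0] at this
      rw [Finset.sum_range_succ, Finset.sum_range_succ, Finset.sum_range_one] at this
      have e0 : (q.coeff 0) • t ^ 0 = (q.coeff 0 : T) * t ^ 0 := by rw [Algebra.smul_def]; rfl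
      have e1 : (q.coeff 1) • t ^ 1 = (q.coeff 1 : T) * t ^ 1 := by rw [Algebra.smul_def]; rfl
      have e2 : (q.coeff 2) • t ^ 2 = (q.coeff 2 : T) * t ^ 2 := by rw [Algebra.smul_def]; rfl
      rw [e0, e1, e2] at this
      linear_combination -this
    rw [h1] at heq
    push_cast at heq
    -- heq : ↑(q.coeff 2) * t ^ 2 + (-1) * t ^ 1 + ↑(q.coeff 0) * t ^ 0 = 0
    have hmem : ((q.coeff 2 : T) * t) ∈ R := mem q 2 hdeg h0
    set r : R := ⟨(q.coeff 2 : T) * t, hmem⟩ with hrdef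
    rcases IsLocalRing.isUnit_or_isUnit_one_sub_self r with hu | hu
    · -- r = c₂ t is a unit, so t is invertible with inverse in R
      obtain ⟨u, hu⟩ := hu
      right
      refine ⟨q.coeff 2 * (↑u⁻¹ : R), ?_⟩
      have h1' : (r : T) * ((↑u⁻¹ : R) : T) = 1 := by
        have : (u : R) * (↑u⁻¹ : R) = 1 := u.mul_inv
        rw [hu] at this
        exact_mod_cast congrArg (fun x : R => (x : T)) this
      push_cast
      calc t * ((q.coeff 2 : T) * ((↑u⁻¹ : R) : T))
          = ((q.coeff 2 : T) * t) * ((↑u⁻¹ : R) : T) := by ring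
        _ = 1 := h1'
    · -- 1 - r is a unit, so t = c₀ (1-r)⁻¹ ∈ R
      obtain ⟨u, hu⟩ := hu
      left
      have ht1 : t * (((1 : R) - r : R) : T) = (q.coeff 0 : T) := by
        have hrT : (r : T) = (q.coeff 2 : T) * t := rfl
        push_cast [hrT]
        linear_combination -heq
      have : t = ((q.coeff 0 * (↑u⁻¹ : R) : R) : T) := by
        have hinv : (((1 : R) - r : R) : T) * ((↑u⁻¹ : R) : T) = 1 := by
          have : ((1 : R) - r) * (↑u⁻¹ : R) = 1 := by rw [← hu]; exact u.mul_inv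
          exact_mod_cast congrArg (fun x : R => (x : T)) this
        push_cast
        calc t = t * ((((1 : R) - r : R) : T) * ((↑u⁻¹ : R) : T)) := by rw [hinv, mul_one]
          _ = (t * (((1 : R) - r : R) : T)) * ((↑u⁻¹ : R) : T) := by ring
          _ = (q.coeff 0 : T) * ((↑u⁻¹ : R) : T) := by rw [ht1]
      rw [this]
      exact SetLike.coe_mem _
  | succ d hd IH =>
    intro q hdeg h1 h0
    have hmem : ((q.coeff (d + 1) : T) * t) ∈ R := mem q (d + 1) hdeg h0
    set cd : R := q.coeff (d + 1) with hcd
    set r : R := ⟨(cd : T) * t, hmem⟩ with hrdef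
    set q' : Polynomial R := q - C cd * X ^ (d + 1) + C r * X ^ d with hq'
    have haev : Polynomial.aeval t q' = 0 := by
      rw [hq']
      simp only [map_add, map_sub, map_mul, aeval_C, aeval_X_pow, h0]
      have hrT : ((algebraMap R T) r) = (cd : T) * t := rfl
      have hcT : ((algebraMap R T) cd) = (cd : T) := rfl
      rw [hrT, hcT, pow_succ]
      ring
    have hdeg' : q'.natDegree ≤ d := by
      rw [Polynomial.natDegree_le_iff_coeff_eq_zero]
      intro N hN
      rw [hq', coeff_add, coeff_sub, coeff_C_mul, coeff_C_mul, coeff_X_pow, coeff_X_pow]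
      rw [if_neg (by omega : ¬ N = d)]
      rcases (by omega : N = d + 1 ∨ d + 1 < N) with h | h
      · subst h
        rw [if_pos rfl, ← hcd]
        ring
      · rw [if_neg (by omega : ¬ N = d + 1)]
        have : q.coeff N = 0 := by
          apply Polynomial.coeff_eq_zero_of_natDegree_lt
          omega
        rw [this]
        ring
    have h1' : q'.coeff 1 = -1 := by
      rw [hq', coeff_add, coeff_sub, coeff_C_mul, coeff_C_mul, coeff_X_pow, coeff_X_pow]
      rw [if_neg (by omega : ¬ 1 = d + 1), if_neg (by omega : ¬ 1 = d), h1]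
      ring
    exact IH q' hdeg' h1' haev

/-- Let R ⊆ T be Noetherian domains forming a normal pair, with R local. Then for all
nonzero b, c ∈ R with c/b ∈ T, either c/b ∈ R or b/c ∈ R. -/
theorem comparability_of_normal_pair_local
    (T : Type*) [CommRing T] [IsDomain T] [IsNoetherianRing T]
    (R : Subring T) [IsNoetherianRing R] [IsLocalRing R]
    (hnormal : ∀ S : Subring T, R ≤ S → ∀ x : T, IsIntegral S x → x ∈ S) :
    ∀ b c : R, b ≠ 0 → c ≠ 0 → (∃ t : T, (b : T) * t = (c : T)) →
      (∃ r : R, b * r = c) ∨ (∃ r : R, c * r = b) := by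
  intro b c hb hc ⟨t, ht⟩
  have hR : ∀ x : T, IsIntegral R x → x ∈ R := fun x hx => hnormal R le_rfl x hx
  -- the subring R[t²]
  set A : Subalgebra R T := Algebra.adjoin R ({t ^ 2} : Set T) with hA
  have hRA : R ≤ A.toSubring := by
    intro r hr
    have := A.algebraMap_mem ⟨r, hr⟩
    exact this
  have ht2 : t ^ 2 ∈ A := Algebra.subset_adjoin (Set.mem_singleton _)
  have hint : IsIntegral A.toSubring t := by
    refine ⟨X ^ 2 - C (⟨t ^ 2, ht2⟩ : A.toSubring), monic_X_pow_sub_C _ (by norm_num), ?_⟩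
    rw [eval₂_sub, eval₂_pow, eval₂_X, eval₂_C]
    have : (algebraMap A.toSubring T) (⟨t ^ 2, ht2⟩ : A.toSubring) = t ^ 2 := rfl
    rw [this, sub_self]
  have htA : t ∈ A := hnormal A.toSubring hRA t hint
  rw [hA, Algebra.adjoin_singleton_eq_range_aeval] at htA
  obtain ⟨p, hp⟩ := htA
  have hp' : (Polynomial.aeval (t ^ 2)) p = t := hp
  -- the polynomial q₀ = p(X²) - X
  set q0 : Polynomial R := Polynomial.expand R 2 p - X with hq0
  have h1 : q0.coeff 1 = -1 := by
    rw [hq0, coeff_sub, Polynomial.coeff_expand (by norm_num : 0 < 2), coeff_X_one]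
    rw [if_neg (by norm_num)]
    ring
  have haev : Polynomial.aeval t q0 = 0 := by
    rw [hq0, map_sub, Polynomial.expand_aeval, aeval_X, hp', sub_self]
  set d : ℕ := max q0.natDegree 2 with hd
  have := key_reduction R hR t d (le_max_right _ _) q0 (le_max_left _ _) h1 haev
  rcases this with hmem | ⟨r, hr⟩
  · left
    exact ⟨⟨t, hmem⟩, by ext : 1; push_cast; exact ht⟩
  · right
    refine ⟨r, ?_⟩
    have : (c : T) * (r : T) = (b : T) := by
      rw [← ht]
      calc (b : T) * t * (r : T) = (b : T) * (t * (r : T)) := by ring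
        _ = (b : T) := by rw [hr, mul_one]
    exact_mod_cast this
end

section
/- Let R ⊆ T be Noetherian integral domains such that (R,T) is a normal pair, i.e., every ring S with R ⊆ S ⊆ T is integrally closed in T. Then T is an overring of R: every element t ∈ T can be written as a fraction of elements of R, i.e., there exist b, c ∈ R with b ≠ 0 and b·t = c. -/
open Polynomial

/-- Let R ⊆ T be Noetherian domains forming a normal pair. Then T is an overring of R:
every t ∈ T satisfies b * t = c for some b, c ∈ R with b ≠ 0. -/
theorem overring_of_normal_pair
    (T : Type*) [CommRing T] [IsDomain T] [IsNoetherianRing T]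
    (R : Subring T) [IsNoetherianRing R]
    (hnormal : ∀ S : Subring T, R ≤ S → ∀ x : T, IsIntegral S x → x ∈ S) :
    ∀ t : T, ∃ b c : R, b ≠ 0 ∧ (b : T) * t = (c : T) := by
  intro t
  -- Step 1: t ∈ R[t²]
  set A : Subalgebra R T := Algebra.adjoin R {t ^ 2} with hA
  set S : Subring T := A.toSubring with hS
  have hRS : R ≤ S := fun r hr => by
    have : algebraMap R T ⟨r, hr⟩ ∈ A := A.algebraMap_mem _
    exact this
  have ht2 : t ^ 2 ∈ S := Algebra.subset_adjoin rfl
  have htint : IsIntegral S t := by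
    refine ⟨X ^ 2 - C (⟨t ^ 2, ht2⟩ : S), monic_X_pow_sub_C _ two_ne_zero, ?_⟩
    show eval₂ _ _ _ = 0
    rw [eval₂_sub, eval₂_pow, eval₂_X, eval₂_C]
    exact sub_self _
  have htS : t ∈ S := hnormal S hRS t htint
  -- extract polynomial f over R with f(t²) = t
  rw [hS] at htS
  have htA : t ∈ A := htS
  rw [hA, Algebra.adjoin_singleton_eq_range_aeval] at htA
  obtain ⟨f, hf⟩ := htA
  -- Step 2: t is a root of q = expand 2 f - X, a nonzero polynomial over R
  set q : Polynomial R := expand R 2 f - X with hq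
  have hq1 : q.coeff 1 = -1 := by
    rw [hq, coeff_sub, coeff_expand (by norm_num : 0 < 2), coeff_X_one]
    norm_num
  have hqne : q ≠ 0 := fun h => by simp [h] at hq1
  have hqt : aeval t q = 0 := by
    rw [hq, map_sub, expand_aeval, aeval_X]
    exact sub_eq_zero.mpr hf
  -- Step 3: leading coefficient trick, then integrally-closedness of R in T
  have hint : IsIntegral R (q.leadingCoeff • t) := isIntegral_leadingCoeff_smul q t hqt
  have hmem : (q.leadingCoeff : T) * t ∈ R := by
    have := hnormal R le_rfl (q.leadingCoeff • t) hint
    rwa [Algebra.smul_def] at this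
  refine ⟨q.leadingCoeff, ⟨_, hmem⟩, ?_, rfl⟩
  exact leadingCoeff_ne_zero.mpr hqne
end
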